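/- Let a, b, D, ξ be real numbers with a ≠ 0, D > 0, ξ > 0, and let Φ(t) = −(1/a)·( log|1 − ξ e^{2aDt}| + (b/2 − Da)·t ) on U = { t : ξ e^{2aDt} ≠ 1 }. Then Φ''(t) > 0 for all t ∈ U if and only if a > 0; indeed Φ''(t) = 4aD² ξ e^{2aDt}/(1 − ξ e^{2aDt})² has the sign of a at every t ∈ U. -/

import Mathlib

/-- positivity analysis for the Case 1b solution: `Φ'' > 0` on all
of `U = {t : ξe^{2aDt} ≠ 1}` iff `a > 0`; indeed
`Φ''(t) = 4aD²ξe^{2aDt}/(1 − ξe^{2aDt})²` has the sign of `a` at every `t ∈ U`. -/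
theorem stmt_14 (a b D ξ : ℝ) (ha : a ≠ 0) (hD : 0 < D) (hξ : 0 < ξ)
    (U : Set ℝ) (hU : U = {t : ℝ | ξ * Real.exp (2 * a * D * t) ≠ 1})
    (Φ : ℝ → ℝ)
    (hΦ : Φ = fun t : ℝ =>
      -(1 / a) * (Real.log |1 - ξ * Real.exp (2 * a * D * t)| + (b / 2 - D * a) * t)) :
    (∀ t ∈ U,
        deriv (deriv Φ) t
          = 4 * a * D ^ 2 * ξ * Real.exp (2 * a * D * t)
              / (1 - ξ * Real.exp (2 * a * D * t)) ^ 2) ∧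
    (∀ t ∈ U, (0 < deriv (deriv Φ) t ↔ 0 < a) ∧ (deriv (deriv Φ) t < 0 ↔ a < 0)) ∧
    ((∀ t ∈ U, 0 < deriv (deriv Φ) t) ↔ 0 < a) := by
  set u : ℝ → ℝ := fun s => ξ * Real.exp (2 * a * D * s) with hu_def
  have h2aD : (2 * a * D) ≠ 0 := by
    exact mul_ne_zero (mul_ne_zero two_ne_zero ha) hD.ne'
  have hupos : ∀ s, 0 < u s := fun s => mul_pos hξ (Real.exp_pos _)
  have hu : ∀ s : ℝ, HasDerivAt u (2 * a * D * u s) s := by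
    intro s
    have h1 : HasDerivAt (fun s : ℝ => 2 * a * D * s) (2 * a * D) s := by
      simpa using (hasDerivAt_id s).const_mul (2 * a * D)
    have h3 := (h1.exp).const_mul ξ
    refine h3.congr_deriv ?_
    simp only [hu_def]; ring
  have hΦeq : Φ = fun t => -(1 / a) * (Real.log (1 - u t) + (b / 2 - D * a) * t) := by
    rw [hΦ]; funext t; rw [Real.log_abs]
  set Ψ : ℝ → ℝ := fun s => -(1 / a) * (-(2 * a * D * u s) / (1 - u s) + (b / 2 - D * a))
    with hΨ_def
  have hΦ' : ∀ s : ℝ, u s ≠ 1 → HasDerivAt Φ (Ψ s) s := by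
    intro s hs
    have hne : 1 - u s ≠ 0 := sub_ne_zero.mpr (Ne.symm hs)
    have hlog : HasDerivAt (fun s => Real.log (1 - u s)) (-(2 * a * D * u s) / (1 - u s)) s := by
      have := ((hu s).const_sub 1).log hne
      simpa using this
    have hlin : HasDerivAt (fun s : ℝ => (b / 2 - D * a) * s) (b / 2 - D * a) s := by
      simpa using (hasDerivAt_id s).const_mul (b / 2 - D * a)
    rw [hΦeq]
    exact (hlog.add hlin).const_mul (-(1 / a))
  have hΨ' : ∀ s : ℝ, u s ≠ 1 →
      HasDerivAt Ψ (4 * a * D ^ 2 * u s / (1 - u s) ^ 2) s := by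
    intro s hs
    have hne : 1 - u s ≠ 0 := sub_ne_zero.mpr (Ne.symm hs)
    have hnum : HasDerivAt (fun s => -(2 * a * D * u s)) (-(2 * a * D * (2 * a * D * u s))) s :=
      ((hu s).const_mul (2 * a * D)).neg
    have hden : HasDerivAt (fun s => 1 - u s) (-(2 * a * D * u s)) s := (hu s).const_sub 1
    have hdiv := (hnum.div hden hne)
    have := (hdiv.add_const (b / 2 - D * a)).const_mul (-(1 / a))
    refine this.congr_deriv ?_
    field_simp
    ring
  have hUopen : IsOpen U := by
    rw [hU]
    have : Continuous u := by
      exact continuous_const.mul ((continuous_const.mul continuous_id).rexp)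
    exact isOpen_compl_singleton.preimage this
  have key : ∀ t ∈ U, deriv (deriv Φ) t = 4 * a * D ^ 2 * u t / (1 - u t) ^ 2 := by
    intro t ht
    have hmem : U ∈ nhds t := hUopen.mem_nhds ht
    have heq : deriv Φ =ᶠ[nhds t] Ψ := by
      filter_upwards [hmem] with s hs
      have : u s ≠ 1 := by rw [hU] at hs; exact hs
      exact (hΦ' s this).deriv
    have ht1 : u t ≠ 1 := by rw [hU] at ht; exact ht
    rw [heq.deriv_eq]
    exact (hΨ' t ht1).deriv
  have hfactor : ∀ t ∈ U, deriv (deriv Φ) t = a * (4 * D ^ 2 * u t / (1 - u t) ^ 2) := by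
    intro t ht
    rw [key t ht]; ring
  have hcpos : ∀ t ∈ U, 0 < 4 * D ^ 2 * u t / (1 - u t) ^ 2 := by
    intro t ht
    have ht1 : u t ≠ 1 := by rw [hU] at ht; exact ht
    have hne : 1 - u t ≠ 0 := sub_ne_zero.mpr (Ne.symm ht1)
    have := hupos t
    positivity
  have signs : ∀ t ∈ U, (0 < deriv (deriv Φ) t ↔ 0 < a) ∧ (deriv (deriv Φ) t < 0 ↔ a < 0) := by
    intro t ht
    rw [hfactor t ht]
    have hc := hcpos t ht
    constructor
    · constructor
      · intro h; nlinarith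
      · intro h; exact mul_pos h hc
    · constructor
      · intro h; nlinarith
      · intro h; exact mul_neg_of_neg_of_pos h hc
  refine ⟨?_, signs, ?_⟩
  · intro t ht
    rw [key t ht]; simp only [hu_def]; ring_nf
  · constructor
    · intro h
      set t0 : ℝ := Real.log (2 / ξ) / (2 * a * D) with ht0
      have hut0 : u t0 = 2 := by
        simp only [hu_def, ht0]
        rw [mul_div_cancel₀ _ h2aD, Real.exp_log (by positivity)]
        field_simp
      have ht0U : t0 ∈ U := by
        rw [hU]; simp only [Set.mem_setOf_eq]
        show u t0 ≠ 1
        rw [hut0]; norm_num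
      exact ((signs t0 ht0U).1).mp (h t0 ht0U)
    · intro hapos t ht
      exact ((signs t ht).1).mpr hapos
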